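/- Let k be a field of characteristic different from 2, let Q(x,y,z) = xz − y² with polar form B((x,y,z),(x',y',z')) = xz' + zx' − 2yy', let α ∈ kˣ, and let v ∈ k³ satisfy Q(v) = α. Then the set of values of Q on the nonzero vectors of the orthogonal plane of v is exactly the set of negatives of the nonzero-vector values of the binary form αx² + y²: {Q(w) : w ∈ k³, w ≠ 0, B(v,w) = 0} = {−(αx² + y²) : (x,y) ∈ k², (x,y) ≠ (0,0)}. (That is, Q restricted to v^⊥ is equivalent to −αx² − y² and takes values exactly in −K_α.) -/

import Mathlib

theorem stmt_10 {k : Type*} [Field k] (hchar : ringChar k ≠ 2)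
    (α : k) (hα : α ≠ 0) (v : k × k × k)
    (hv : v.1 * v.2.2 - v.2.1 ^ 2 = α) :
    {q : k | ∃ w : k × k × k, w ≠ 0 ∧
        v.1 * w.2.2 + v.2.2 * w.1 - 2 * v.2.1 * w.2.1 = 0 ∧
        q = w.1 * w.2.2 - w.2.1 ^ 2} =
      {q : k | ∃ x y : k, (x, y) ≠ (0, 0) ∧ q = -(α * x ^ 2 + y ^ 2)} := by
  have h2 : (2:k) ≠ 0 := Ring.two_ne_zero hchar
  have h4 : (4:k) ≠ 0 := by
    rw [show (4:k) = 2*2 by norm_num]; exact mul_ne_zero h2 h2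
  obtain ⟨a, b, c⟩ := v
  dsimp only at hv ⊢
  ext q
  simp only [Set.mem_setOf_eq]
  rcases eq_or_ne a 0 with ha | ha
  · -- a = 0, so α = -b², b ≠ 0
    subst ha
    have hb : b ≠ 0 := by
      intro h; apply hα; rw [← hv, h]; ring
    have h2b : (2:k)*b ≠ 0 := mul_ne_zero h2 hb
    constructor
    · rintro ⟨⟨w1, w2, w3⟩, hw0, hperp, rfl⟩
      dsimp only at hperp ⊢
      refine ⟨(w1 + (w3 - c^2*w1/(4*b^2)))/(2*b), (w3 - c^2*w1/(4*b^2) - w1)/2, ?_, ?_⟩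
      · intro h
        rw [Prod.mk.injEq] at h
        obtain ⟨hx, hy⟩ := h
        have hx' : w1 + (w3 - c^2*w1/(4*b^2)) = 0 :=
          (div_eq_zero_iff.mp hx).resolve_right h2b
        have hy' : w3 - c^2*w1/(4*b^2) - w1 = 0 :=
          (div_eq_zero_iff.mp hy).resolve_right h2
        have h1 : w1 = 0 := by
          have h2w : (2:k) * w1 = 0 := by linear_combination hx' - hy'
          exact (mul_eq_zero.mp h2w).resolve_left h2
        have h3 : w3 = 0 := by
          rw [h1] at hx'
          simpa using hx'
        have hB : w2 = 0 := by
          rw [h1] at hperp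
          have hz : 2 * b * w2 = 0 := by linear_combination -hperp
          rcases mul_eq_zero.mp hz with h | h
          · exact absurd ((mul_eq_zero.mp h).resolve_left h2) hb
          · exact h
        exact hw0 (by simp [h1, hB, h3])
      · have hw2 : w2 = c * w1 / (2*b) := by
          rw [eq_div_iff h2b]
          linear_combination -hperp
        rw [hw2, ← hv]
        field_simp [hb, h2, h4]
        ring
    · rintro ⟨x, y, hxy, rfl⟩
      refine ⟨(b*x - y, c*(b*x-y)/(2*b), b*x + y + c^2*(b*x-y)/(4*b^2)), ?_, ?_, ?_⟩
      · intro h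
        simp only [Prod.mk_eq_zero] at h
        obtain ⟨h1, -, h3⟩ := h
        rw [h1] at h3
        have h3' : b*x + y = 0 := by
          field_simp at h3
          exact (mul_eq_zero.mp (show (b^2*4)*(b*x+y) = 0 by linear_combination h3)).resolve_left (mul_ne_zero (pow_ne_zero 2 hb) h4)
        apply hxy
        have hx : x = 0 := by
          have hbx : (2:k) * (b * x) = 0 := by linear_combination h1 + h3'
          rcases mul_eq_zero.mp hbx with h | h
          · exact absurd h h2
          · exact (mul_eq_zero.mp h).resolve_left hb
        have hy : y = 0 := by rw [hx] at h1; simpa using h1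
        rw [hx, hy]
      · dsimp only
        field_simp
        ring
      · dsimp only
        rw [← hv]
        field_simp
        ring
  · -- a ≠ 0
    constructor
    · rintro ⟨⟨w1, w2, w3⟩, hw0, hperp, rfl⟩
      dsimp only at hperp ⊢
      refine ⟨w1/a, w2 - b*w1/a, ?_, ?_⟩
      · intro h
        rw [Prod.mk.injEq] at h
        obtain ⟨hx, hy⟩ := h
        have h1 : w1 = 0 := (div_eq_zero_iff.mp hx).resolve_right ha
        have hB : w2 = 0 := by rw [h1] at hy; simpa using hy
        have h3 : w3 = 0 := by
          rw [h1, hB] at hperp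
          have hz : a * w3 = 0 := by linear_combination hperp
          exact (mul_eq_zero.mp hz).resolve_left ha
        exact hw0 (by simp [h1, hB, h3])
      · have hw3 : w3 = (2*b*w2 - c*w1)/a := by
          rw [eq_div_iff ha]
          linear_combination hperp
        rw [hw3, ← hv]
        field_simp
        ring
    · rintro ⟨x, y, hxy, rfl⟩
      refine ⟨(a*x, y + b*x, (2*b*(y+b*x) - c*a*x)/a), ?_, ?_, ?_⟩
      · intro h
        simp only [Prod.mk_eq_zero] at h
        obtain ⟨h1, hB, -⟩ := h
        apply hxy
        have hx : x = 0 := (mul_eq_zero.mp h1).resolve_left ha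
        have hy : y = 0 := by rw [hx] at hB; simpa using hB
        rw [hx, hy]
      · dsimp only
        field_simp
        ring
      · dsimp only
        rw [← hv]
        field_simp
        ring
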